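/- Let (u, v, ρ, s) be a C¹ supersonic solution of the smooth-flow 2D steady full Euler system on U, with flow angle σ, Mach angle A ∈ (0, π/2), α = σ + A, β = σ − A. Then ∂₊c = (c / sin 2A)(∂₊α − cos 2A · ∂₊β) + ω sin²A and ∂₋c = (c / sin 2A)(cos 2A · ∂₋α − ∂₋β) − ω sin²A on U, where ω = u_y − vₓ. -/

import Mathlib

open Real

noncomputable section

/-- Partial derivative in the `x` direction. -/
def pdx (f : ℝ × ℝ → ℝ) (p : ℝ × ℝ) : ℝ := fderiv ℝ f p (1, 0)

/-- Partial derivative in the `y` direction. -/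
def pdy (f : ℝ × ℝ → ℝ) (p : ℝ × ℝ) : ℝ := fderiv ℝ f p (0, 1)

/-- Directional derivative along the direction with angle `θ p`. -/
def dd (θ : ℝ × ℝ → ℝ) (f : ℝ × ℝ → ℝ) (p : ℝ × ℝ) : ℝ :=
  Real.cos (θ p) * pdx f p + Real.sin (θ p) * pdy f p

/-- Sound speed `c = √(γ s ρ^(γ-1))`. -/
def sound (γ : ℝ) (ρ s : ℝ × ℝ → ℝ) (p : ℝ × ℝ) : ℝ :=
  Real.sqrt (γ * s p * ρ p ^ (γ - 1))

/-- Flow speed `q = √(u² + v²)`. -/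
def speed (u v : ℝ × ℝ → ℝ) (p : ℝ × ℝ) : ℝ :=
  Real.sqrt (u p ^ 2 + v p ^ 2)

/-- Vorticity `ω = u_y − vₓ`. -/
def vort (u v : ℝ × ℝ → ℝ) (p : ℝ × ℝ) : ℝ := pdy u p - pdx v p

lemma pdx_congr {f g : ℝ × ℝ → ℝ} {p : ℝ × ℝ} (h : f =ᶠ[nhds p] g) : pdx f p = pdx g p := by
  rw [pdx, h.fderiv_eq]; rfl
lemma pdy_congr {f g : ℝ × ℝ → ℝ} {p : ℝ × ℝ} (h : f =ᶠ[nhds p] g) : pdy f p = pdy g p := by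
  rw [pdy, h.fderiv_eq]; rfl

lemma pdx_mul {f g : ℝ × ℝ → ℝ} {p : ℝ × ℝ} (hf : DifferentiableAt ℝ f p)
    (hg : DifferentiableAt ℝ g p) :
    pdx (fun q => f q * g q) p = pdx f p * g p + f p * pdx g p := by
  simp only [pdx, fderiv_fun_mul hf hg]; simp [pdx, pdy]; ring
lemma pdy_mul {f g : ℝ × ℝ → ℝ} {p : ℝ × ℝ} (hf : DifferentiableAt ℝ f p)
    (hg : DifferentiableAt ℝ g p) :
    pdy (fun q => f q * g q) p = pdy f p * g p + f p * pdy g p := by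
  simp only [pdy, fderiv_fun_mul hf hg]; simp [pdx, pdy]; ring

lemma pdx_add {f g : ℝ × ℝ → ℝ} {p : ℝ × ℝ} (hf : DifferentiableAt ℝ f p)
    (hg : DifferentiableAt ℝ g p) :
    pdx (fun q => f q + g q) p = pdx f p + pdx g p := by
  simp only [pdx, fderiv_fun_add hf hg]; rfl
lemma pdy_add {f g : ℝ × ℝ → ℝ} {p : ℝ × ℝ} (hf : DifferentiableAt ℝ f p)
    (hg : DifferentiableAt ℝ g p) :
    pdy (fun q => f q + g q) p = pdy f p + pdy g p := by
  simp only [pdy, fderiv_fun_add hf hg]; rfl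
lemma pdx_sub {f g : ℝ × ℝ → ℝ} {p : ℝ × ℝ} (hf : DifferentiableAt ℝ f p)
    (hg : DifferentiableAt ℝ g p) :
    pdx (fun q => f q - g q) p = pdx f p - pdx g p := by
  simp only [pdx, fderiv_fun_sub hf hg]; rfl
lemma pdy_sub {f g : ℝ × ℝ → ℝ} {p : ℝ × ℝ} (hf : DifferentiableAt ℝ f p)
    (hg : DifferentiableAt ℝ g p) :
    pdy (fun q => f q - g q) p = pdy f p - pdy g p := by
  simp only [pdy, fderiv_fun_sub hf hg]; rfl

lemma pdx_cos {f : ℝ × ℝ → ℝ} {p : ℝ × ℝ} (hf : DifferentiableAt ℝ f p) :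
    pdx (fun q => Real.cos (f q)) p = -Real.sin (f p) * pdx f p := by
  simp only [pdx, (hf.hasFDerivAt.cos).fderiv]; simp
lemma pdy_cos {f : ℝ × ℝ → ℝ} {p : ℝ × ℝ} (hf : DifferentiableAt ℝ f p) :
    pdy (fun q => Real.cos (f q)) p = -Real.sin (f p) * pdy f p := by
  simp only [pdy, (hf.hasFDerivAt.cos).fderiv]; simp
lemma pdx_sin {f : ℝ × ℝ → ℝ} {p : ℝ × ℝ} (hf : DifferentiableAt ℝ f p) :
    pdx (fun q => Real.sin (f q)) p = Real.cos (f p) * pdx f p := by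
  simp only [pdx, (hf.hasFDerivAt.sin).fderiv]; simp
lemma pdy_sin {f : ℝ × ℝ → ℝ} {p : ℝ × ℝ} (hf : DifferentiableAt ℝ f p) :
    pdy (fun q => Real.sin (f q)) p = Real.cos (f p) * pdy f p := by
  simp only [pdy, (hf.hasFDerivAt.sin).fderiv]; simp

lemma pdx_rpow {f : ℝ × ℝ → ℝ} {p : ℝ × ℝ} {γ : ℝ} (hf : DifferentiableAt ℝ f p)
    (h0 : f p ≠ 0) :
    pdx (fun q => f q ^ γ) p = γ * f p ^ (γ - 1) * pdx f p := by
  simp only [pdx, (hf.hasFDerivAt.rpow_const (Or.inl h0)).fderiv]; simp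
lemma pdy_rpow {f : ℝ × ℝ → ℝ} {p : ℝ × ℝ} {γ : ℝ} (hf : DifferentiableAt ℝ f p)
    (h0 : f p ≠ 0) :
    pdy (fun q => f q ^ γ) p = γ * f p ^ (γ - 1) * pdy f p := by
  simp only [pdy, (hf.hasFDerivAt.rpow_const (Or.inl h0)).fderiv]; simp

lemma euler_key (γ ρ s P u v q c cσ sσ sA cA σx σy Ax Ay qx qy cx cy ux uy vx vy ρx ρy sx sy : ℝ)
    (hρ : 0 < ρ) (hq : 0 < q) (hsA : 0 < sA) (hcA : 0 < cA)
    (hpyσ : cσ^2 + sσ^2 = 1) (hpyA : cA^2 + sA^2 = 1)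
    (hu : u = q*cσ) (hv : v = q*sσ) (hcq : c = q*sA)
    (hc2 : c^2 = γ*s*P)
    (hux : ux = qx*cσ - q*sσ*σx) (huy : uy = qy*cσ - q*sσ*σy)
    (hvx : vx = qx*sσ + q*cσ*σx) (hvy : vy = qy*sσ + q*cσ*σy)
    (hAx : q*cA*Ax = cx - sA*qx) (hAy : q*cA*Ay = cy - sA*qy)
    (hma : (ρx*u + ρ*ux) + (ρy*v + ρ*vy) = 0)
    (hmx : ρ*(u*ux + v*uy) + ρ*P*sx + γ*s*P*ρx = 0)
    (hmy : ρ*(u*vx + v*vy) + ρ*P*sy + γ*s*P*ρy = 0)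
    (hent : u*sx + v*sy = 0) :
    ((cσ*cA - sσ*sA) * cx + (sσ*cA + cσ*sA) * cy =
      c / (2*sA*cA) * (((cσ*cA - sσ*sA)*(σx+Ax) + (sσ*cA + cσ*sA)*(σy+Ay)) -
        (2*cA^2 - 1)*((cσ*cA - sσ*sA)*(σx-Ax) + (sσ*cA + cσ*sA)*(σy-Ay))) +
      (uy - vx)*sA^2)
    ∧ ((cσ*cA + sσ*sA) * cx + (sσ*cA - cσ*sA) * cy =
      c / (2*sA*cA) * ((2*cA^2 - 1)*((cσ*cA + sσ*sA)*(σx+Ax) + (sσ*cA - cσ*sA)*(σy+Ay)) -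
        ((cσ*cA + sσ*sA)*(σx-Ax) + (sσ*cA - cσ*sA)*(σy-Ay))) -
      (uy - vx)*sA^2) := by
  subst hu hv hcq hux huy hvx hvy
  have hρq : (ρ*q) ≠ 0 := by positivity
  have hs0 : cσ*sx + sσ*sy = 0 := by
    apply mul_left_cancel₀ hq.ne'
    linear_combination hent
  have hS1 : ρ*q*(cσ*qx + sσ*qy) + γ*s*P*(cσ*ρx + sσ*ρy) = 0 := by
    linear_combination cσ*hmx + sσ*hmy - ρ*P*hs0 - ρ*q*(cσ*qx+sσ*qy)*hpyσ
  have hF2 : cA^2*(cσ*qx + sσ*qy) = sA^2*q*(cσ*σy - sσ*σx) := by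
    apply mul_left_cancel₀ hρq
    linear_combination (cA^2+sA^2)*hS1 - sA^2*q*hma + (cσ*ρx+sσ*ρy)*hc2 - γ*s*P*(cσ*ρx+sσ*ρy)*hpyA
  have h2 : (2*sA*cA) ≠ 0 := by positivity
  have hre : (2*cA^2 - (1:ℝ)) = cA^2 - sA^2 := by linarith [hpyA]
  rw [hre]
  constructor
  · rw [div_mul_eq_mul_div, div_add' _ _ _ h2, eq_div_iff h2]
    linear_combination (-2*sA*cA*(cσ*cA - sσ*sA))*hAx + (-2*sA*cA*(sσ*cA + cσ*sA))*hAy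
      + 2*sA^2*hF2 + q*sA*((cσ*cA - sσ*sA)*(σx+Ax)+(sσ*cA + cσ*sA)*(σy+Ay))*hpyA
  · rw [div_mul_eq_mul_div, div_sub' h2, eq_div_iff h2]
    linear_combination (-2*sA*cA*(cσ*cA + sσ*sA))*hAx + (-2*sA*cA*(sσ*cA - cσ*sA))*hAy
      + 2*sA^2*hF2 - q*sA*((cσ*cA + sσ*sA)*(σx-Ax)+(sσ*cA - cσ*sA)*(σy-Ay))*hpyA

theorem stmt_4 (γ : ℝ) (hγ : 1 < γ) (U : Set (ℝ × ℝ)) (hU : IsOpen U)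
    (u v ρ s σ A : ℝ × ℝ → ℝ)
    (hu : ContDiffOn ℝ 1 u U) (hv : ContDiffOn ℝ 1 v U)
    (hρ : ContDiffOn ℝ 1 ρ U) (hs : ContDiffOn ℝ 1 s U)
    (hσ : ContDiffOn ℝ 1 σ U) (hA : ContDiffOn ℝ 1 A U)
    (hρpos : ∀ p ∈ U, 0 < ρ p) (hspos : ∀ p ∈ U, 0 < s p)
    (hmass : ∀ p ∈ U, pdx (fun q => ρ q * u q) p + pdy (fun q => ρ q * v q) p = 0)
    (hmomx : ∀ p ∈ U,
      u p * pdx u p + v p * pdy u p + (ρ p)⁻¹ * pdx (fun q => s q * ρ q ^ γ) p = 0)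
    (hmomy : ∀ p ∈ U,
      u p * pdx v p + v p * pdy v p + (ρ p)⁻¹ * pdy (fun q => s q * ρ q ^ γ) p = 0)
    (hent : ∀ p ∈ U, u p * pdx s p + v p * pdy s p = 0)
    (hsup : ∀ p ∈ U, (sound γ ρ s p) ^ 2 < u p ^ 2 + v p ^ 2)
    (huσ : ∀ p ∈ U, u p = speed u v p * Real.cos (σ p))
    (hvσ : ∀ p ∈ U, v p = speed u v p * Real.sin (σ p))
    (hsinA : ∀ p ∈ U, Real.sin (A p) = sound γ ρ s p / speed u v p)
    (hA0 : ∀ p ∈ U, 0 < A p) (hA2 : ∀ p ∈ U, A p < Real.pi / 2)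
    :
    ∀ p ∈ U,
      (dd (fun q => σ q + A q) (sound γ ρ s) p =
        sound γ ρ s p / Real.sin (2 * A p) *
          (dd (fun q => σ q + A q) (fun q => σ q + A q) p -
            Real.cos (2 * A p) * dd (fun q => σ q + A q) (fun q => σ q - A q) p) +
        vort u v p * Real.sin (A p) ^ 2) ∧
      (dd (fun q => σ q - A q) (sound γ ρ s) p =
        sound γ ρ s p / Real.sin (2 * A p) *
          (Real.cos (2 * A p) * dd (fun q => σ q - A q) (fun q => σ q + A q) p -
            dd (fun q => σ q - A q) (fun q => σ q - A q) p) -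
        vort u v p * Real.sin (A p) ^ 2) := by
  intro p hp
  have hmem := hU.mem_nhds hp
  have hρp := hρpos p hp
  have hsp := hspos p hp
  have hγ0 : (0:ℝ) < γ := by linarith
  have hud : DifferentiableAt ℝ u p := (hu.contDiffAt hmem).differentiableAt one_ne_zero
  have hvd : DifferentiableAt ℝ v p := (hv.contDiffAt hmem).differentiableAt one_ne_zero
  have hρd : DifferentiableAt ℝ ρ p := (hρ.contDiffAt hmem).differentiableAt one_ne_zero
  have hsd : DifferentiableAt ℝ s p := (hs.contDiffAt hmem).differentiableAt one_ne_zero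
  have hσd : DifferentiableAt ℝ σ p := (hσ.contDiffAt hmem).differentiableAt one_ne_zero
  have hAd : DifferentiableAt ℝ A p := (hA.contDiffAt hmem).differentiableAt one_ne_zero
  have hinnerpos : 0 < γ * s p * ρ p ^ (γ - 1) := by
    have := Real.rpow_pos_of_pos hρp (γ - 1); positivity
  have hcpos : 0 < sound γ ρ s p := Real.sqrt_pos.2 hinnerpos
  have hc2 : sound γ ρ s p ^ 2 = γ * s p * ρ p ^ (γ - 1) := Real.sq_sqrt hinnerpos.le
  have hqposU : ∀ r ∈ U, 0 < speed u v r := fun r hr =>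
    Real.sqrt_pos.2 (lt_of_le_of_lt (sq_nonneg _) (hsup r hr))
  have hqpos : 0 < speed u v p := hqposU p hp
  have hqd : DifferentiableAt ℝ (speed u v) p := by
    have h0 : u p ^ 2 + v p ^ 2 ≠ 0 := (lt_of_le_of_lt (sq_nonneg _) (hsup p hp)).ne'
    exact ((hud.pow 2).add (hvd.pow 2)).sqrt h0
  have hcd : DifferentiableAt ℝ (sound γ ρ s) p :=
    ((hsd.const_mul γ).mul (hρd.rpow_const (Or.inl hρp.ne'))).sqrt hinnerpos.ne'
  have hsA : 0 < Real.sin (A p) := by rw [hsinA p hp]; exact div_pos hcpos hqpos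
  have hcA : 0 < Real.cos (A p) :=
    Real.cos_pos_of_mem_Ioo ⟨by linarith [Real.pi_pos, hA0 p hp], hA2 p hp⟩
  have hcq : sound γ ρ s p = speed u v p * Real.sin (A p) := by
    rw [hsinA p hp]; field_simp
  have hEu : u =ᶠ[nhds p] fun r => speed u v r * Real.cos (σ r) :=
    Filter.eventuallyEq_of_mem hmem (fun r hr => huσ r hr)
  have hEv : v =ᶠ[nhds p] fun r => speed u v r * Real.sin (σ r) :=
    Filter.eventuallyEq_of_mem hmem (fun r hr => hvσ r hr)
  have hEA : (sound γ ρ s) =ᶠ[nhds p] fun r => Real.sin (A r) * speed u v r :=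
    Filter.eventuallyEq_of_mem hmem (fun r hr => by
      rw [hsinA r hr, div_mul_cancel₀ _ (hqposU r hr).ne'])
  have hux : pdx u p = pdx (speed u v) p * Real.cos (σ p) -
      speed u v p * Real.sin (σ p) * pdx σ p := by
    rw [pdx_congr hEu, pdx_mul hqd hσd.cos, pdx_cos hσd]; ring
  have huy : pdy u p = pdy (speed u v) p * Real.cos (σ p) -
      speed u v p * Real.sin (σ p) * pdy σ p := by
    rw [pdy_congr hEu, pdy_mul hqd hσd.cos, pdy_cos hσd]; ring
  have hvx : pdx v p = pdx (speed u v) p * Real.sin (σ p) +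
      speed u v p * Real.cos (σ p) * pdx σ p := by
    rw [pdx_congr hEv, pdx_mul hqd hσd.sin, pdx_sin hσd]; ring
  have hvy : pdy v p = pdy (speed u v) p * Real.sin (σ p) +
      speed u v p * Real.cos (σ p) * pdy σ p := by
    rw [pdy_congr hEv, pdy_mul hqd hσd.sin, pdy_sin hσd]; ring
  have hAx : speed u v p * Real.cos (A p) * pdx A p =
      pdx (sound γ ρ s) p - Real.sin (A p) * pdx (speed u v) p := by
    rw [pdx_congr hEA, pdx_mul hAd.sin hqd, pdx_sin hAd]; ring
  have hAy : speed u v p * Real.cos (A p) * pdy A p =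
      pdy (sound γ ρ s) p - Real.sin (A p) * pdy (speed u v) p := by
    rw [pdy_congr hEA, pdy_mul hAd.sin hqd, pdy_sin hAd]; ring
  have hma : (pdx ρ p * u p + ρ p * pdx u p) + (pdy ρ p * v p + ρ p * pdy v p) = 0 := by
    have h := hmass p hp
    rwa [pdx_mul hρd hud, pdy_mul hρd hvd] at h
  have hrg : ρ p ^ γ = ρ p ^ (γ - 1) * ρ p := by
    rw [Real.rpow_sub hρp, Real.rpow_one]; field_simp
  have hmx : ρ p * (u p * pdx u p + v p * pdy u p) + ρ p * ρ p ^ (γ - 1) * pdx s p +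
      γ * s p * ρ p ^ (γ - 1) * pdx ρ p = 0 := by
    have h := hmomx p hp
    rw [pdx_mul hsd (hρd.rpow_const (Or.inl hρp.ne')), pdx_rpow hρd hρp.ne', hrg] at h
    field_simp at h
    linear_combination h
  have hmy : ρ p * (u p * pdx v p + v p * pdy v p) + ρ p * ρ p ^ (γ - 1) * pdy s p +
      γ * s p * ρ p ^ (γ - 1) * pdy ρ p = 0 := by
    have h := hmomy p hp
    rw [pdy_mul hsd (hρd.rpow_const (Or.inl hρp.ne')), pdy_rpow hρd hρp.ne', hrg] at h
    field_simp at h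
    linear_combination h
  obtain ⟨G1, G2⟩ := euler_key γ (ρ p) (s p) (ρ p ^ (γ - 1)) (u p) (v p) (speed u v p)
    (sound γ ρ s p) (Real.cos (σ p)) (Real.sin (σ p)) (Real.sin (A p)) (Real.cos (A p))
    (pdx σ p) (pdy σ p) (pdx A p) (pdy A p) (pdx (speed u v) p) (pdy (speed u v) p)
    (pdx (sound γ ρ s) p) (pdy (sound γ ρ s) p)
    (pdx u p) (pdy u p) (pdx v p) (pdy v p) (pdx ρ p) (pdy ρ p) (pdx s p) (pdy s p)
    hρp hqpos hsA hcA (Real.cos_sq_add_sin_sq _) (Real.cos_sq_add_sin_sq _)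
    (huσ p hp) (hvσ p hp) hcq hc2 hux huy hvx hvy hAx hAy hma hmx hmy (hent p hp)
  constructor
  · simp only [dd, vort]
    rw [Real.sin_two_mul, Real.cos_two_mul, Real.cos_add, Real.sin_add,
      pdx_add hσd hAd, pdy_add hσd hAd, pdx_sub hσd hAd, pdy_sub hσd hAd]
    linear_combination G1
  · simp only [dd, vort]
    rw [Real.sin_two_mul, Real.cos_two_mul, Real.cos_sub, Real.sin_sub,
      pdx_add hσd hAd, pdy_add hσd hAd, pdx_sub hσd hAd, pdy_sub hσd hAd]
    linear_combination G2

end
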